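/- Let n be a positive integer, let Λ be an additive submonoid of ℚⁿ that is not a group (i.e., not closed under negation), and let A be an integral domain. Then the semigroup ring D = A[Λ] admits a nontrivial ℝ_{≥0}-grading; that is, there exist additive subgroups D_c of D for c ∈ ℝ_{≥0} such that D = ⊕_{c ∈ ℝ_{≥0}} D_c, D_c · D_{c'} ⊆ D_{c+c'} for all c, c' ≥ 0, and D ≠ D₀. -/

import Mathlib

universe u

/-- A commutative ring `D` is *Egyptian* if every nonzero `d : D` is a sum of reciprocals
`d = 1/d₁ + ⋯ + 1/dₙ` of finitely many pairwise distinct nonzero elements `dᵢ` of `D`, the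
equality holding in any field in which `D` embeds.  (For an integral domain `D` this is
equivalent to the usual definition, in which the equality is required in the fraction field
of `D`: such an equality holds in one field containing `D` iff it holds in all of them.) -/
def IsEgyptian (D : Type u) [CommRing D] : Prop :=
  ∀ d : D, d ≠ 0 → ∃ s : Finset D, (∀ i ∈ s, i ≠ 0) ∧
    ∀ (K : Type u) [Field K] (φ : D →+* K), Function.Injective φ →
      φ d = ∑ i ∈ s, (φ i)⁻¹

/-- A domain `D` is *generically Egyptian* if `D[1/f]` is Egyptian for some nonzero `f : D`. -/
def IsGenericallyEgyptian (D : Type u) [CommRing D] : Prop :=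
  ∃ f : D, f ≠ 0 ∧ IsEgyptian (Localization.Away f)

/-- A domain `D` is *locally Egyptian* if there is a finite set of generators of the unit
ideal of `D` such that inverting any one of them yields an Egyptian ring. -/
def IsLocallyEgyptian (D : Type u) [CommRing D] : Prop :=
  ∃ s : Finset D, Ideal.span (s : Set D) = ⊤ ∧
    ∀ f ∈ s, IsEgyptian (Localization.Away f)

open scoped NNReal

noncomputable section


noncomputable section

def castL (ι : Type*) : (ι → ℚ) →ₗ[ℚ] (ι → ℝ) where
  toFun v := fun i => (v i : ℝ)
  map_add' a b := by ext i; simp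
  map_smul' q v := by ext i; simp [Rat.smul_def]

theorem castL_inj {ι : Type*} : Function.Injective (castL ι) := by
  intro a b h
  ext i
  have := congrFun h i
  simpa [castL] using this

theorem castL_qsmul {ι : Type*} (q : ℚ) (w : ι → ℚ) :
    castL ι (q • w) = (q : ℝ) • castL ι w := by
  ext i; simp [castL, Rat.smul_def]

theorem castL_single {ι : Type*} [DecidableEq ι] (j : ι) :
    castL ι (Pi.single j (1:ℚ)) = Pi.single j (1:ℝ) := by
  ext i
  by_cases h : i = j <;> simp [castL, Pi.single_apply, h]


theorem single_scale {M : Type*} [AddCommMonoid M] [Module ℚ M] (Λ : AddSubmonoid M)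
    {q : ℚ} (hq : 0 ≤ q) {u : M} (hu : u ∈ Λ) :
    ∃ N : ℕ, 0 < N ∧ (N : ℚ) • (q • u) ∈ Λ := by
  refine ⟨q.den, q.pos, ?_⟩
  have hd : ((q.den : ℚ)) ≠ 0 := by exact_mod_cast q.den_ne_zero
  have h1 : ((q.den : ℚ)) * q = (q.num : ℚ) := by
    rw [mul_comm, ← eq_div_iff hd]
    exact (Rat.num_div_den q).symm
  rw [smul_smul, h1]
  have h2 : (q.num : ℚ) = ((q.num.toNat : ℕ) : ℚ) := by
    exact_mod_cast (Int.toNat_of_nonneg (Rat.num_nonneg.mpr hq)).symm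
  rw [h2, Nat.cast_smul_eq_nsmul]
  exact AddSubmonoid.nsmul_mem Λ hu _

theorem cone_scale {M : Type*} [AddCommMonoid M] [Module ℚ M] (Λ : AddSubmonoid M)
    {α : Type*} (s : Finset α) (g : α → ℚ) (u : α → M)
    (hg : ∀ k ∈ s, 0 ≤ g k) (hu : ∀ k ∈ s, u k ∈ Λ) :
    ∃ N : ℕ, 0 < N ∧ (N : ℚ) • (∑ k ∈ s, g k • u k) ∈ Λ := by
  classical
  induction s using Finset.induction_on with
  | empty => exact ⟨1, one_pos, by simpa using Λ.zero_mem⟩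
  | insert _ _ ha ih =>
    rename_i a s
    obtain ⟨N, hN, hNmem⟩ := ih (fun k hk => hg k (Finset.mem_insert_of_mem hk))
      (fun k hk => hu k (Finset.mem_insert_of_mem hk))
    obtain ⟨M', hM', hMmem⟩ := single_scale Λ (hg a (Finset.mem_insert_self a s))
      (hu a (Finset.mem_insert_self a s))
    refine ⟨N * M', Nat.mul_pos hN hM', ?_⟩
    rw [Finset.sum_insert ha, smul_add]
    refine Λ.add_mem ?_ ?_
    · have h3 : ((N * M' : ℕ) : ℚ) • (g a • u a) = N • ((M' : ℚ) • (g a • u a)) := by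
        rw [← Nat.cast_smul_eq_nsmul ℚ N, smul_smul, smul_smul, smul_smul]
        congr 1
        push_cast
        ring
      rw [h3]
      exact AddSubmonoid.nsmul_mem Λ hMmem _
    · have h3 : ((N * M' : ℕ) : ℚ) • (∑ k ∈ s, g k • u k) =
          M' • ((N : ℚ) • (∑ k ∈ s, g k • u k)) := by
        rw [← Nat.cast_smul_eq_nsmul ℚ M', smul_smul]
        congr 1
        push_cast
        ring
      rw [h3]
      exact AddSubmonoid.nsmul_mem Λ hNmem _

theorem neg_mem_of_cone {M : Type*} [AddCommGroup M] [Module ℚ M] (Λ : AddSubmonoid M)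
    {x : M} (hx : x ∈ Λ) {α : Type*} (s : Finset α) (g : α → ℚ) (u : α → M)
    (hg : ∀ k ∈ s, 0 ≤ g k) (hu : ∀ k ∈ s, u k ∈ Λ)
    (hrep : -x = ∑ k ∈ s, g k • u k) : -x ∈ Λ := by
  obtain ⟨N, hN, hNmem⟩ := cone_scale Λ s g u hg hu
  rw [← hrep] at hNmem
  have key : -x = (N : ℚ) • (-x) + ((N - 1 : ℕ) : ℚ) • x := by
    have hc : ((N - 1 : ℕ) : ℚ) = (N : ℚ) - 1 := by
      push_cast [Nat.cast_sub hN]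
      ring
    rw [hc]
    module
  rw [key]
  refine Λ.add_mem hNmem ?_
  rw [Nat.cast_smul_eq_nsmul]
  exact AddSubmonoid.nsmul_mem Λ hx _

variable {ι κ : Type*} [Fintype ι] [Fintype κ] [DecidableEq ι] [DecidableEq κ]

def realify (g : (ι → ℚ) →ₗ[ℚ] (κ → ℚ)) : (ι → ℝ) →ₗ[ℝ] (κ → ℝ) :=
  Matrix.toLin' ((LinearMap.toMatrix' g).map (fun q => (q : ℝ)))

theorem realify_cast (g : (ι → ℚ) →ₗ[ℚ] (κ → ℚ)) (v : ι → ℚ) :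
    realify g (castL ι v) = castL κ (g v) := by
  ext k
  have hg : g v = (LinearMap.toMatrix' g).mulVec v := by
    rw [← Matrix.toLin'_apply, Matrix.toLin'_toMatrix']
  simp only [realify, Matrix.toLin'_apply, castL, LinearMap.coe_mk, AddHom.coe_mk, hg,
    Matrix.mulVec, dotProduct, Matrix.map_apply]
  push_cast
  rfl

theorem realify_comp {σ : Type*} [Fintype σ] [DecidableEq σ]
    (g : (κ → ℚ) →ₗ[ℚ] (σ → ℚ)) (h : (ι → ℚ) →ₗ[ℚ] (κ → ℚ)) :
    realify (g ∘ₗ h) = realify g ∘ₗ realify h := by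
  unfold realify
  rw [LinearMap.toMatrix'_comp, ← Matrix.toLin'_mul]
  congr 1
  exact Matrix.map_mul (f := (Rat.castHom ℝ))

theorem realify_id : realify (LinearMap.id : (ι → ℚ) →ₗ[ℚ] (ι → ℚ)) = LinearMap.id := by
  unfold realify
  rw [LinearMap.toMatrix'_id]
  rw [show ((1 : Matrix ι ι ℚ).map fun q => (q:ℝ)) = (1 : Matrix ι ι ℝ) from
    Matrix.map_one _ (by norm_num) (by norm_num)]
  exact Matrix.toLin'_one

-- the span-top case
theorem span_top_case (n : ℕ) (Λ : AddSubmonoid (Fin n → ℚ))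
    (hspan : Submodule.span ℚ (Λ : Set (Fin n → ℚ)) = ⊤)
    {x : Fin n → ℚ} (hx : x ∈ Λ) (hnx : -x ∉ Λ) :
    ∃ f : (Fin n → ℝ) →ₗ[ℝ] ℝ, (∀ v ∈ Λ, 0 ≤ f (castL (Fin n) v)) ∧
      (∃ v ∈ Λ, 0 < f (castL (Fin n) v)) := by
  classical
  by_contra hcon
  push_neg at hcon
  -- Step A: a functional vanishing on Λ is zero
  have hsub : ∀ v : Fin n → ℚ,
      castL (Fin n) v ∈ Submodule.span ℝ (castL (Fin n) '' (Λ : Set (Fin n → ℚ))) := by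
    intro v
    have hv : v ∈ Submodule.span ℚ (Λ : Set (Fin n → ℚ)) := by rw [hspan]; trivial
    induction hv using Submodule.span_induction with
    | mem y hy => exact Submodule.subset_span ⟨y, hy, rfl⟩
    | zero => simpa using Submodule.zero_mem _
    | add a b _ _ ha hb => rw [map_add]; exact Submodule.add_mem _ ha hb
    | smul q a _ ha => rw [castL_qsmul]; exact Submodule.smul_mem _ _ ha
  have hsp : Submodule.span ℝ (castL (Fin n) '' (Λ : Set (Fin n → ℚ))) = ⊤ := by
    rw [eq_top_iff]
    rintro w -
    have hw : w = ∑ i, w i • (Pi.single i (1:ℝ) : Fin n → ℝ) := by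
      ext j
      simp [Pi.single_apply, Finset.sum_apply]
    rw [hw]
    refine Submodule.sum_mem _ (fun i _ => Submodule.smul_mem _ _ ?_)
    rw [← castL_single i]
    exact hsub _
  have hzero : ∀ f : (Fin n → ℝ) →ₗ[ℝ] ℝ, (∀ v ∈ Λ, f (castL (Fin n) v) = 0) → f = 0 := by
    intro f hf
    refine LinearMap.ext_on hsp ?_
    rintro - ⟨v, hv, rfl⟩
    simpa using hf v hv
  have hone : ∀ f : (Fin n → ℝ) →ₗ[ℝ] ℝ, (∀ v ∈ Λ, 0 ≤ f (castL (Fin n) v)) → f = 0 := by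
    intro f hf
    refine hzero f (fun v hv => le_antisymm ?_ (hf v hv))
    by_contra hpos
    push_neg at hpos
    exact absurd (hcon f hf v hv) (not_le.mpr hpos)
  set castSet : Set (Fin n → ℝ) := castL (Fin n) '' (Λ : Set (Fin n → ℚ)) with hcastSet
  set C : Submodule ℝ≥0 (Fin n → ℝ) := Submodule.span ℝ≥0 castSet with hC
  have hCconv : Convex ℝ (C : Set (Fin n → ℝ)) := by
    intro a ha b hb s r hs hr hsr
    have h1 : s • a = (⟨s, hs⟩ : ℝ≥0) • a := by simp [NNReal.smul_def]
    have h2 : r • b = (⟨r, hr⟩ : ℝ≥0) • b := by simp [NNReal.smul_def]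
    rw [h1, h2]
    exact C.add_mem (C.smul_mem _ ha) (C.smul_mem _ hb)
  have hclos : closure (C : Set (Fin n → ℝ)) = Set.univ := by
    by_contra hne
    obtain ⟨pt, hpt⟩ : ∃ pt, pt ∉ closure (C : Set (Fin n → ℝ)) := by
      rw [← Set.ne_univ_iff_exists_notMem]; exact hne
    obtain ⟨f, u, hfu, hup⟩ :=
      geometric_hahn_banach_closed_point (hCconv.closure) isClosed_closure hpt
    have hu0 : 0 < u := by
      have := hfu 0 (subset_closure (C.zero_mem))
      simpa using this
    have hle : ∀ v ∈ Λ, f (castL (Fin n) v) ≤ 0 := by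
      intro v hv
      by_contra hpos
      push_neg at hpos
      obtain ⟨m, hm⟩ := exists_nat_gt (u / f (castL (Fin n) v))
      have hmv : (m • v) ∈ Λ := AddSubmonoid.nsmul_mem Λ hv m
      have h2 : f (castL (Fin n) (m • v)) < u :=
        hfu _ (subset_closure (Submodule.subset_span ⟨_, hmv, rfl⟩))
      rw [map_nsmul, map_nsmul, nsmul_eq_mul] at h2
      rw [div_lt_iff₀ hpos] at hm
      linarith
    have hfzero : (-(f.toLinearMap)) = 0 := by
      refine hone _ (fun v hv => ?_)
      simp only [LinearMap.neg_apply, ContinuousLinearMap.coe_coe, Left.nonneg_neg_iff]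
      exact hle v hv
    have : f pt = 0 := by
      have h3 : f.toLinearMap = 0 := by
        rw [← neg_eq_zero]; exact hfzero
      have := LinearMap.congr_fun h3 pt
      simpa using this
    linarith
  -- basis from Λ
  obtain ⟨t, hts, htsp, htlin⟩ := exists_linearIndependent ℚ (Λ : Set (Fin n → ℚ))
  haveI : Fintype t := (htlin.setFinite).fintype
  haveI : DecidableEq ↥t := Classical.decEq _
  set B : Module.Basis ↥t ℚ (Fin n → ℚ) :=
    Module.Basis.mk htlin (by rw [Subtype.range_coe, htsp, hspan]) with hBdef
  have hB : ∀ i : ↥t, B i = (i : Fin n → ℚ) := fun i => Module.Basis.mk_apply _ _ _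
  have hBΛ : ∀ i : ↥t, B i ∈ Λ := fun i => by rw [hB i]; exact hts i.2
  set S : (Fin n → ℚ) →ₗ[ℚ] (↥t → ℚ) := B.equivFun.toLinearMap with hSdef
  set Sinv : (↥t → ℚ) →ₗ[ℚ] (Fin n → ℚ) := B.equivFun.symm.toLinearMap with hSinvdef
  set SR : (Fin n → ℝ) →ₗ[ℝ] (↥t → ℝ) := realify S with hSRdef
  set SinvR : (↥t → ℝ) →ₗ[ℝ] (Fin n → ℝ) := realify Sinv with hSinvRdef
  have hcomp : SR ∘ₗ SinvR = LinearMap.id := by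
    rw [hSRdef, hSinvRdef, ← realify_comp,
      show S ∘ₗ Sinv = LinearMap.id from by ext c; simp [hSdef, hSinvdef], realify_id]
  have hcomp2 : SinvR ∘ₗ SR = LinearMap.id := by
    rw [hSRdef, hSinvRdef, ← realify_comp,
      show Sinv ∘ₗ S = LinearMap.id from by ext c; simp [hSdef, hSinvdef], realify_id]
  have hSinvR : ∀ c : ↥t → ℝ, SinvR c = ∑ i, c i • castL (Fin n) (B i) := by
    have heq : SinvR = ∑ i : ↥t,
        (LinearMap.proj i : (↥t → ℝ) →ₗ[ℝ] ℝ).smulRight (castL (Fin n) (B i)) := by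
      refine (Pi.basisFun ℝ ↥t).ext (fun j => ?_)
      rw [Pi.basisFun_apply, ← castL_single j, hSinvRdef, realify_cast]
      have h1 : Sinv (Pi.single j (1:ℚ)) = B j := by
        rw [hSinvdef]
        simp only [LinearEquiv.coe_coe]
        rw [B.equivFun_symm_apply]
        simp [Pi.single_apply]
      rw [h1]
      rw [LinearMap.sum_apply]
      simp only [LinearMap.smulRight_apply, LinearMap.proj_apply, castL_single]
      rw [Finset.sum_eq_single j]
      · simp
      · intro i _ hij
        simp [Pi.single_apply, Ne.symm hij]
      · simp
    intro c
    rw [heq]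
    simp [LinearMap.sum_apply]
  have hrep : ∀ z : Fin n → ℝ, z = ∑ i, SR z i • castL (Fin n) (B i) := by
    intro z
    rw [← hSinvR]
    exact (LinearMap.congr_fun hcomp2 z).symm
  have hSRcont : Continuous SR := SR.continuous_of_finiteDimensional
  have hUopen : IsOpen (⇑SR ⁻¹' {c : ↥t → ℝ | ∀ i, 0 < c i}) := by
    have h1 : IsOpen {c : ↥t → ℝ | ∀ i, 0 < c i} := by
      have : {c : ↥t → ℝ | ∀ i, 0 < c i} = Set.pi Set.univ (fun _ => Set.Ioi 0) := by
        ext; simp [Set.mem_pi]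
      rw [this]
      exact isOpen_set_pi Set.finite_univ (fun i _ => isOpen_Ioi)
    exact h1.preimage hSRcont
  have hUC : ⇑SR ⁻¹' {c : ↥t → ℝ | ∀ i, 0 < c i} ⊆ (C : Set (Fin n → ℝ)) := by
    intro z hz
    have : z = ∑ i, SR z i • castL (Fin n) (B i) := hrep z
    rw [this]
    refine Submodule.sum_mem _ (fun i _ => ?_)
    have h1 : SR z i • castL (Fin n) (B i)
        = (⟨SR z i, (hz i).le⟩ : ℝ≥0) • castL (Fin n) (B i) := by simp [NNReal.smul_def]
    rw [h1]
    exact C.smul_mem _ (Submodule.subset_span ⟨B i, hBΛ i, rfl⟩)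
  have hz₀U : (∑ i, castL (Fin n) (B i)) ∈ ⇑SR ⁻¹' {c : ↥t → ℝ | ∀ i, 0 < c i} := by
    have h1 : (∑ i, castL (Fin n) (B i)) = SinvR (fun _ => 1) := by
      rw [hSinvR]; simp
    have h2 : SR (∑ i, castL (Fin n) (B i)) = fun _ => (1:ℝ) := by
      rw [h1]
      exact LinearMap.congr_fun hcomp _
    intro i
    show 0 < SR _ i
    rw [h2]
    norm_num
  have hz₀int : (∑ i, castL (Fin n) (B i)) ∈ interior (C : Set (Fin n → ℝ)) :=
    interior_maximal hUC hUopen hz₀U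
  have hCuniv : ∀ z : Fin n → ℝ, z ∈ C := by
    intro z
    have hz₂ : ((2:ℝ) • z - ∑ i, castL (Fin n) (B i)) ∈ closure (C : Set (Fin n → ℝ)) := by
      rw [hclos]; trivial
    have hcombo := hCconv.combo_interior_closure_mem_interior hz₀int hz₂
      (by norm_num : (0:ℝ) < 1/2) (by norm_num : (0:ℝ) ≤ 1/2) (by norm_num)
    have heq : (1/2 : ℝ) • (∑ i, castL (Fin n) (B i))
        + (1/2 : ℝ) • ((2:ℝ) • z - ∑ i, castL (Fin n) (B i)) = z := by module
    rw [heq] at hcombo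
    exact interior_subset hcombo
  -- rationalization
  set v : Fin n → ℚ := -x - ∑ i, B i with hvdef
  have hvC : castL (Fin n) v ∈ C := hCuniv _
  obtain ⟨c, hcsupp, hcsum⟩ := Submodule.mem_span_set.mp (by exact hvC)
  set m : (Fin n → ℝ) → (Fin n → ℚ) := fun z =>
    if h : ∃ a ∈ (Λ : Set (Fin n → ℚ)), castL (Fin n) a = z then h.choose else 0 with hmdef
  have hm : ∀ z ∈ c.support, m z ∈ Λ ∧ castL (Fin n) (m z) = z := by
    intro z hz
    obtain ⟨a, ha, hae⟩ := hcsupp hz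
    have hex : ∃ a ∈ (Λ : Set (Fin n → ℚ)), castL (Fin n) a = z := ⟨a, ha, hae⟩
    rw [hmdef]
    simp only [dif_pos hex]
    exact ⟨hex.choose_spec.1, hex.choose_spec.2⟩
  set r : (Fin n → ℝ) → ↥t → ℚ := fun z => B.equivFun (m z) with hrdef
  set Sb : ℝ := ∑ z ∈ c.support, ∑ i, |((r z i : ℚ) : ℝ)| with hSbdef
  have hSb0 : 0 ≤ Sb := by
    refine Finset.sum_nonneg (fun z _ => Finset.sum_nonneg (fun i _ => abs_nonneg _))
  set δ : ℝ := 1 / (1 + Sb) with hδdef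
  have hδ : 0 < δ := by positivity
  have hbtwn : ∀ z : Fin n → ℝ, ((c z : ℝ≥0) : ℝ) < ((c z : ℝ≥0) : ℝ) + δ :=
    fun z => lt_add_of_pos_right _ hδ
  set q : (Fin n → ℝ) → ℚ := fun z => (exists_rat_btwn (hbtwn z)).choose with hqdef
  have hq1 : ∀ z, ((c z : ℝ≥0) : ℝ) < ((q z : ℚ) : ℝ) :=
    fun z => (exists_rat_btwn (hbtwn z)).choose_spec.1
  have hq2 : ∀ z, ((q z : ℚ) : ℝ) < ((c z : ℝ≥0) : ℝ) + δ :=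
    fun z => (exists_rat_btwn (hbtwn z)).choose_spec.2
  have hq0 : ∀ z, 0 ≤ q z := by
    intro z
    have : (0:ℝ) ≤ ((q z : ℚ) : ℝ) := le_of_lt (lt_of_le_of_lt (c z).2 (hq1 z))
    exact_mod_cast this
  set yq : Fin n → ℚ := ∑ z ∈ c.support, q z • m z with hyqdef
  set p : ↥t → ℚ := B.equivFun (-x - yq) with hpdef
  have hsum_p : ∑ i, p i • B i = -x - yq := B.sum_equivFun _
  -- real identity
  have hcastv : castL (Fin n) v = ∑ z ∈ c.support, ((c z : ℝ≥0) : ℝ) • z := by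
    rw [← hcsum]
    rw [Finsupp.sum]
    refine Finset.sum_congr rfl (fun z _ => ?_)
    rw [NNReal.smul_def]
  have hcastyq : castL (Fin n) yq = ∑ z ∈ c.support, ((q z : ℚ) : ℝ) • z := by
    rw [hyqdef, map_sum]
    refine Finset.sum_congr rfl (fun z hz => ?_)
    rw [castL_qsmul, (hm z hz).2]
  have e2 : castL (Fin n) (-x - yq)
      = (∑ z ∈ c.support, (((c z : ℝ≥0) : ℝ) - ((q z : ℚ) : ℝ)) • z)
        + ∑ i, castL (Fin n) (B i) := by
    have hxv : (-x - yq : Fin n → ℚ) = v + (∑ i, B i) - yq := by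
      rw [hvdef]; abel
    rw [hxv, map_sub, map_add, map_sum, hcastv, hcastyq]
    have hsplit : ∑ z ∈ c.support, (((c z : ℝ≥0) : ℝ) - ((q z : ℚ) : ℝ)) • z
        = (∑ z ∈ c.support, ((c z : ℝ≥0) : ℝ) • z)
          - ∑ z ∈ c.support, ((q z : ℚ) : ℝ) • z := by
      rw [← Finset.sum_sub_distrib]
      exact Finset.sum_congr rfl (fun z _ => sub_smul _ _ _)
    rw [hsplit]
    abel
  have hpi : ∀ i : ↥t, ((p i : ℚ) : ℝ)
      = 1 + ∑ z ∈ c.support, ((((c z : ℝ≥0) : ℝ) - ((q z : ℚ) : ℝ)) * ((r z i : ℚ) : ℝ)) := by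
    intro i
    have h1 : SR (castL (Fin n) (-x - yq)) = castL ↥t p := by
      rw [hSRdef, realify_cast]
      rfl
    have h2 : SR (castL (Fin n) (-x - yq))
        = (∑ z ∈ c.support, (((c z : ℝ≥0) : ℝ) - ((q z : ℚ) : ℝ)) • SR z)
          + ∑ i', SR (castL (Fin n) (B i')) := by
      rw [e2, map_add, map_sum, map_sum]
      congr 1
      refine Finset.sum_congr rfl (fun z _ => ?_)
      rw [map_smul]
    have h3 : ∀ z ∈ c.support, SR z = castL ↥t (r z) := by
      intro z hz
      conv_lhs => rw [← (hm z hz).2]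
      rw [hSRdef, realify_cast]
      rfl
    have h4 : ∀ i' : ↥t, SR (castL (Fin n) (B i')) = castL ↥t (B.equivFun (B i')) := by
      intro i'
      rw [hSRdef, realify_cast]
      rfl
    have h5 := congrFun (h1.symm.trans h2) i
    simp only [Finset.sum_apply, Pi.add_apply, Pi.smul_apply, smul_eq_mul] at h5
    have h6 : castL ↥t p i = ((p i : ℚ) : ℝ) := rfl
    rw [h6] at h5
    have h7 : ∑ i', SR (castL (Fin n) (B i')) i = 1 := by
      have : ∀ i' : ↥t, SR (castL (Fin n) (B i')) i
          = ((B.equivFun (B i') i : ℚ) : ℝ) := fun i' => by rw [h4 i']; rfl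
      rw [Finset.sum_congr rfl (fun i' _ => this i')]
      simp [B.equivFun_self, apply_ite (fun (a : ℚ) => (a : ℝ))]
    have h8 : ∀ z ∈ c.support, SR z i = ((r z i : ℚ) : ℝ) := by
      intro z hz
      rw [h3 z hz]; rfl
    rw [h5, Finset.sum_congr rfl (fun z hz => by rw [h8 z hz]),
      Finset.sum_congr rfl (fun i' (_ : i' ∈ Finset.univ) => rfl), h7]
    ring
  have hppos : ∀ i : ↥t, 0 ≤ p i := by
    intro i
    have hb1 : |∑ z ∈ c.support, ((((c z : ℝ≥0) : ℝ) - ((q z : ℚ) : ℝ)) * ((r z i : ℚ) : ℝ))|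
        ≤ δ * Sb := by
      calc |∑ z ∈ c.support, ((((c z : ℝ≥0) : ℝ) - ((q z : ℚ) : ℝ)) * ((r z i : ℚ) : ℝ))|
          ≤ ∑ z ∈ c.support, |(((c z : ℝ≥0) : ℝ) - ((q z : ℚ) : ℝ)) * ((r z i : ℚ) : ℝ)| :=
            Finset.abs_sum_le_sum_abs _ _
        _ ≤ ∑ z ∈ c.support, δ * |((r z i : ℚ) : ℝ)| := by
            refine Finset.sum_le_sum (fun z _ => ?_)
            rw [abs_mul]
            refine mul_le_mul_of_nonneg_right ?_ (abs_nonneg _)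
            rw [abs_le]
            constructor
            · linarith [hq1 z, hq2 z]
            · linarith [hq1 z, hq2 z]
        _ = δ * ∑ z ∈ c.support, |((r z i : ℚ) : ℝ)| := by rw [Finset.mul_sum]
        _ ≤ δ * Sb := by
            refine mul_le_mul_of_nonneg_left ?_ hδ.le
            rw [hSbdef]
            refine Finset.sum_le_sum (fun z _ => ?_)
            exact Finset.single_le_sum (fun i' _ => abs_nonneg ((r z i' : ℚ) : ℝ))
              (Finset.mem_univ i)
    have hlt1 : δ * Sb < 1 := by
      rw [hδdef, div_mul_eq_mul_div, one_mul, div_lt_one (by positivity)]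
      linarith
    have : (0:ℝ) ≤ ((p i : ℚ) : ℝ) := by
      rw [hpi i]
      have := neg_abs_le (∑ z ∈ c.support,
        ((((c z : ℝ≥0) : ℝ) - ((q z : ℚ) : ℝ)) * ((r z i : ℚ) : ℝ)))
      linarith
    exact_mod_cast this
  -- conclude
  have hrepQ : -x = ∑ z ∈ c.support, q z • m z + ∑ i, p i • B i := by
    rw [hsum_p, hyqdef]; abel
  have hrep' : -x = ∑ k ∈ c.support.disjSum (Finset.univ : Finset ↥t),
      Sum.elim q p k • Sum.elim m (fun i : ↥t => B i) k := by
    rw [Finset.sum_disjSum]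
    simpa using hrepQ
  refine hnx (neg_mem_of_cone Λ hx _ _ _ ?_ ?_ hrep')
  · rintro (z | i) hk
    · simp only [Sum.elim_inl]
      exact hq0 z
    · simp only [Sum.elim_inr]
      exact hppos i
  · rintro (z | i) hk
    · simp only [Sum.elim_inr, Sum.elim_inl]
      rw [Finset.inl_mem_disjSum] at hk
      exact (hm z hk).1
    · simp only [Sum.elim_inr]
      exact hBΛ i

theorem lemmaF : ∀ n : ℕ, ∀ (Λ : AddSubmonoid (Fin n → ℚ)) (x : Fin n → ℚ), x ∈ Λ → -x ∉ Λ →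
    ∃ f : (Fin n → ℝ) →ₗ[ℝ] ℝ, (∀ v ∈ Λ, 0 ≤ f (castL (Fin n) v)) ∧
      (∃ v ∈ Λ, 0 < f (castL (Fin n) v)) := by
  intro n
  induction n using Nat.strong_induction_on with
  | _ n ih =>
    intro Λ x hx hnx
    by_cases hspan : Submodule.span ℚ (Λ : Set (Fin n → ℚ)) = ⊤
    · exact span_top_case n Λ hspan hx hnx
    · set V := Submodule.span ℚ (Λ : Set (Fin n → ℚ)) with hVdef
      set d := Module.finrank ℚ V with hddef
      have hd : d < n := by
        have h1 := Submodule.finrank_lt (K := ℚ) (V := Fin n → ℚ)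
          hspan
        rwa [Module.finrank_fin_fun] at h1
      set e : V ≃ₗ[ℚ] (Fin d → ℚ) := (Module.finBasis ℚ V).equivFun with hedef
      obtain ⟨π, hπ⟩ := V.subtype.exists_leftInverse_of_injective V.ker_subtype
      set P : (Fin n → ℚ) →ₗ[ℚ] (Fin d → ℚ) := e.toLinearMap ∘ₗ π with hPdef
      have hPV : ∀ (v : Fin n → ℚ) (hv : v ∈ V), P v = e ⟨v, hv⟩ := by
        intro v hv
        have h1 := LinearMap.congr_fun hπ ⟨v, hv⟩
        simp only [LinearMap.comp_apply, Submodule.coe_subtype, LinearMap.id_apply] at h1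
        simp only [hPdef, LinearMap.comp_apply, LinearEquiv.coe_coe]
        exact congrArg e h1
      set Λ' : AddSubmonoid (Fin d → ℚ) := AddSubmonoid.map P.toAddMonoidHom Λ with hΛ'def
      have hxV : x ∈ V := Submodule.subset_span hx
      have hx' : P x ∈ Λ' := ⟨x, hx, rfl⟩
      have hnx' : -(P x) ∉ Λ' := by
        rintro ⟨y, hy, hyP⟩
        have hyV : y ∈ V := Submodule.subset_span hy
        have hnxV : -x ∈ V := V.neg_mem hxV
        have h2 : P y = P (-x) := by
          rw [map_neg]
          exact hyP
        have h3 : y = -x := by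
          have h4 : e ⟨y, hyV⟩ = e ⟨-x, hnxV⟩ := by
            rw [← hPV y hyV, ← hPV (-x) hnxV, h2]
          exact congrArg Subtype.val (e.injective h4)
        exact hnx (h3 ▸ hy)
      obtain ⟨f', hf1, v', hv', hv'pos⟩ := ih d hd Λ' (P x) hx' hnx'
      refine ⟨f' ∘ₗ realify P, ?_, ?_⟩
      · intro v hv
        rw [LinearMap.comp_apply, realify_cast]
        exact hf1 (P v) ⟨v, hv, rfl⟩
      · obtain ⟨u, hu, huP⟩ := hv'
        refine ⟨u, hu, ?_⟩
        rw [LinearMap.comp_apply, realify_cast]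
        show (0:ℝ) < f' (castL (Fin d) (P u))
        rw [show P u = v' from huP]
        exact hv'pos

theorem keyLemma (n : ℕ) (Λ : AddSubmonoid (Fin n → ℚ))
    (hΛ : ∃ x ∈ Λ, -x ∉ Λ) :
    ∃ w : Λ →+ ℝ≥0, ∃ y : Λ, w y ≠ 0 := by
  obtain ⟨x, hx, hnx⟩ := hΛ
  obtain ⟨f, hf0, v, hv, hvpos⟩ := lemmaF n Λ x hx hnx
  refine ⟨{ toFun := fun a => ⟨f (castL (Fin n) (a : Fin n → ℚ)), hf0 _ a.2⟩,
            map_zero' := ?_, map_add' := ?_ }, ⟨v, hv⟩, ?_⟩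
  · ext
    simp only [NNReal.coe_zero, NNReal.coe_mk]
    show f (castL (Fin n) ((0 : Λ) : Fin n → ℚ)) = 0
    rw [show ((0 : Λ) : Fin n → ℚ) = 0 from rfl, map_zero, map_zero]
  · intro a b
    ext
    show f (castL (Fin n) ((a + b : Λ) : Fin n → ℚ)) = f (castL (Fin n) (a : Fin n → ℚ)) + f (castL (Fin n) (b : Fin n → ℚ))
    rw [show ((a + b : Λ) : Fin n → ℚ) = (a : Fin n → ℚ) + (b : Fin n → ℚ) from rfl,
      map_add, map_add]
  · intro h
    have := congrArg NNReal.toReal h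
    simp only [NNReal.coe_mk, NNReal.coe_zero] at this
    exact hvpos.ne' this

end

/-- If `Λ` is an additive submonoid of `ℚⁿ` that is not a group (not closed under negation)
and `A` is an integral domain, then the semigroup ring `D = A[Λ]` admits a nontrivial
`ℝ_{≥0}`-grading: an internal direct sum decomposition `D = ⊕_{c ∈ ℝ_{≥0}} 𝒜 c` into additive
subgroups with `𝒜 c * 𝒜 c' ⊆ 𝒜 (c + c')` and `𝒜 0 ≠ D`. -/
theorem statement3 (n : ℕ) (hn : 0 < n) (Λ : AddSubmonoid (Fin n → ℚ))
    (hΛ : ∃ x ∈ Λ, -x ∉ Λ) (A : Type u) [CommRing A] [IsDomain A] :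
    ∃ 𝒜 : ℝ≥0 → AddSubgroup (AddMonoidAlgebra A Λ),
      DirectSum.IsInternal 𝒜 ∧
      (∀ c c' : ℝ≥0, ∀ x ∈ 𝒜 c, ∀ y ∈ 𝒜 c', x * y ∈ 𝒜 (c + c')) ∧
      𝒜 0 ≠ ⊤ := by
  classical
  obtain ⟨w, y, hwy⟩ := keyLemma n Λ hΛ
  refine ⟨fun c => (AddMonoidAlgebra.gradeBy A (w : Λ → ℝ≥0) c).toAddSubgroup, ?_, ?_, ?_⟩
  · exact AddMonoidAlgebra.gradeBy.isInternal w
  · intro c c' x hx y hy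
    exact SetLike.mul_mem_graded (A := AddMonoidAlgebra.gradeBy A (w : Λ → ℝ≥0))
      (show x ∈ AddMonoidAlgebra.gradeBy A (w : Λ → ℝ≥0) c from hx)
      (show y ∈ AddMonoidAlgebra.gradeBy A (w : Λ → ℝ≥0) c' from hy)
  · intro h
    have h1 : AddMonoidAlgebra.single y (1:A) ∈ (AddMonoidAlgebra.gradeBy A (w : Λ → ℝ≥0) 0).toAddSubgroup := h.ge (AddSubgroup.mem_top (AddMonoidAlgebra.single y (1:A)))
    exact hwy (h1 y (by simp))
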